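/- For n < β < n+2 and fixed δ > 0, the Fourier multiplier has the asymptotic growth |m^{δ,β}(ν)| ~ C‖ν‖^{β−n} as ‖ν‖ → ∞ for some constant C = C(n, β, δ) > 0, whereas for β < n the multiplier m^{δ,β}(ν) remains bounded as ‖ν‖ → ∞. -/

import Mathlib

open MeasureTheory Metric Real Filter
open scoped RealInnerProductSpace Topology

/-- The Fourier multiplier `m^{δ,β}(ν)` with the standard normalization constant. -/
noncomputable def nonlocalMultiplierFn (n : ℕ) (δ β : ℝ)
    (ν : EuclideanSpace ℝ (Fin n)) : ℝ :=
  (2 * (n + 2 - β) * Real.Gamma ((n : ℝ) / 2 + 1) /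
      (Real.pi ^ ((n : ℝ) / 2) * δ ^ ((n : ℝ) + 2 - β))) *
    ∫ z in ball (0 : EuclideanSpace ℝ (Fin n)) δ,
      (Real.cos ⟪ν, z⟫ - 1) / ‖z‖ ^ β

section Aux

open Set
open scoped Pointwise

/-- The integral kernel of the multiplier. -/
noncomputable def hker (n : ℕ) (β : ℝ) (ν z : EuclideanSpace ℝ (Fin n)) : ℝ :=
  (Real.cos ⟪ν, z⟫ - 1) / ‖z‖ ^ β

lemma measurable_hker (n : ℕ) (β : ℝ) (ν : EuclideanSpace ℝ (Fin n)) :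
    Measurable (hker n β ν) :=
  (((Real.continuous_cos.comp (continuous_const.inner continuous_id)).sub
      continuous_const).measurable).div (measurable_norm.pow_const β)

lemma abs_hker_le (n : ℕ) (β : ℝ) (ν z : EuclideanSpace ℝ (Fin n)) :
    |hker n β ν z| ≤ 2 * ‖z‖ ^ (-β) := by
  rcases eq_or_ne z 0 with rfl | hz
  · have h0 : hker n β ν 0 = 0 := by
      simp [hker]
    rw [h0, abs_zero]
    positivity
  have hzpos : (0:ℝ) < ‖z‖ := norm_pos_iff.2 hz
  have hpow : (0:ℝ) < ‖z‖ ^ β := Real.rpow_pos_of_pos hzpos _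
  rw [hker, abs_div, abs_of_pos hpow, Real.rpow_neg hzpos.le, div_eq_mul_inv]
  gcongr
  have h1 := Real.cos_le_one ⟪ν, z⟫
  have h2 := Real.neg_one_le_cos ⟪ν, z⟫
  rw [abs_le]; constructor <;> linarith

lemma integrableOn_norm_rpow_ball {n : ℕ} (hn : 1 ≤ n) {γ : ℝ} (hγ : γ < n) (R : ℝ) :
    IntegrableOn (fun z : EuclideanSpace ℝ (Fin n) => ‖z‖ ^ (-γ)) (ball 0 R) := by
  haveI : Nonempty (Fin n) := ⟨⟨0, hn⟩⟩
  have hmeas : Measurable (fun z : EuclideanSpace ℝ (Fin n) => ‖z‖ ^ (-γ)) :=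
    measurable_norm.pow_const _
  rcases le_or_gt R 0 with hR | hR
  · rw [ball_eq_empty.2 hR]; exact integrableOn_empty
  rcases le_or_gt γ 0 with hγ0 | hγ0
  · -- bounded case
    apply Measure.integrableOn_of_bounded (M := R ^ (-γ)) measure_ball_lt_top.ne
      hmeas.aestronglyMeasurable
    rw [ae_restrict_iff' measurableSet_ball]
    filter_upwards with z hz
    rw [mem_ball_zero_iff] at hz
    rw [Real.norm_eq_abs, abs_of_nonneg (Real.rpow_nonneg (norm_nonneg _) _)]
    exact Real.rpow_le_rpow (norm_nonneg _) hz.le (by linarith)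
  · -- annuli
    set r : ℝ := 1/2 with hr
    set t : ℕ → ℝ := fun k => R * r ^ k with ht
    have htpos : ∀ k, 0 < t k := fun k => by positivity
    set A : ℕ → Set (EuclideanSpace ℝ (Fin n)) :=
      fun k => closedBall 0 (t k) \ ball 0 (t (k+1)) with hA
    have hAmeas : ∀ k, MeasurableSet (A k) :=
      fun k => measurableSet_closedBall.diff measurableSet_ball
    have hMbound : ∀ k, ∀ z ∈ A k, ‖(‖z‖ ^ (-γ) : ℝ)‖ ≤ (t (k+1)) ^ (-γ) := by
      intro k z hz
      obtain ⟨hz1, hz2⟩ := hz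
      rw [mem_ball_zero_iff, not_lt] at hz2
      rw [Real.norm_eq_abs, abs_of_nonneg (Real.rpow_nonneg (norm_nonneg _) _)]
      exact Real.rpow_le_rpow_of_nonpos (htpos _) hz2 (by linarith)
    have hAint : ∀ k, IntegrableOn (fun z : EuclideanSpace ℝ (Fin n) => ‖z‖ ^ (-γ)) (A k) := by
      intro k
      apply Measure.integrableOn_of_bounded (M := (t (k+1)) ^ (-γ))
      · exact ((measure_mono (diff_subset.trans (closedBall_subset_closedBall le_rfl))).trans_lt
          measure_closedBall_lt_top).ne
      · exact hmeas.aestronglyMeasurable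
      · rw [ae_restrict_iff' (hAmeas k)]
        filter_upwards with z hz using hMbound k z hz
    -- summability
    set V : ℝ := (volume (ball (0 : EuclideanSpace ℝ (Fin n)) 1)).toReal with hV
    have hsum : Summable fun k : ℕ =>
        ∫ z in A k, ‖(‖z‖ ^ (-γ) : ℝ)‖ := by
      have key : ∀ k : ℕ, ∫ z in A k, ‖(‖z‖ ^ (-γ) : ℝ)‖ ≤
          ((R*r) ^ (-γ) * (R ^ n * V)) * (r ^ ((n:ℝ) - γ)) ^ k := by
        intro k
        have h1 : ∫ z in A k, ‖(‖z‖ ^ (-γ) : ℝ)‖ ≤ (t (k+1)) ^ (-γ) * (volume (A k)).toReal := by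
          calc ∫ z in A k, ‖(‖z‖ ^ (-γ) : ℝ)‖
              ≤ ∫ _ in A k, (t (k+1)) ^ (-γ) := by
                apply setIntegral_mono_on (hAint k).norm
                  (integrableOn_const (((measure_mono diff_subset).trans_lt
                    measure_closedBall_lt_top)).ne) (hAmeas k)
                exact hMbound k
            _ = (volume (A k)).toReal * (t (k+1)) ^ (-γ) := by
                rw [setIntegral_const]; rfl
            _ = _ := mul_comm _ _
        have h2 : (volume (A k)).toReal ≤ (t k) ^ n * V := by
          have := measure_mono (μ := (volume : Measure (EuclideanSpace ℝ (Fin n))))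
            (diff_subset (s := closedBall 0 (t k)) (t := ball 0 (t (k+1))))
          have hball : volume (closedBall (0 : EuclideanSpace ℝ (Fin n)) (t k))
              = ENNReal.ofReal ((t k) ^ Module.finrank ℝ (EuclideanSpace ℝ (Fin n))) *
                volume (ball (0 : EuclideanSpace ℝ (Fin n)) 1) :=
            Measure.addHaar_closedBall _ _ (htpos k).le
          calc (volume (A k)).toReal ≤ (volume (closedBall (0 : EuclideanSpace ℝ (Fin n)) (t k))).toReal := by
                apply ENNReal.toReal_mono measure_closedBall_lt_top.ne this
            _ = (t k) ^ n * V := by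
                rw [hball, ENNReal.toReal_mul, ENNReal.toReal_ofReal (by positivity)]
                rw [show Module.finrank ℝ (EuclideanSpace ℝ (Fin n)) = n from
                  finrank_euclideanSpace_fin]
        calc ∫ z in A k, ‖(‖z‖ ^ (-γ) : ℝ)‖ ≤ (t (k+1)) ^ (-γ) * ((t k) ^ n * V) := by
              refine h1.trans ?_
              exact mul_le_mul_of_nonneg_left h2 (Real.rpow_nonneg (htpos _).le _)
          _ = ((R*r) ^ (-γ) * (R ^ n * V)) * (r ^ ((n:ℝ) - γ)) ^ k := by
              have e1 : (t (k+1)) ^ (-γ) = (R*r) ^ (-γ) * (r^(-γ)) ^ k := by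
                have : t (k+1) = (R*r) * r ^ k := by rw [ht]; ring
                rw [this, Real.mul_rpow (by positivity) (by positivity),
                  ← Real.rpow_natCast (r ^ (-γ)) k, ← Real.rpow_mul (by norm_num),
                  mul_comm (-γ) (k:ℝ), Real.rpow_mul (by norm_num), Real.rpow_natCast]
              have e2 : (t k) ^ n = R ^ n * ((r:ℝ)^(n:ℝ)) ^ k := by
                rw [ht]
                rw [Real.rpow_natCast, mul_pow, ← pow_mul, ← pow_mul, mul_comm k n]
              rw [e1, e2]
              have e3 : (r ^ ((n:ℝ) - γ)) ^ k = (r^(-γ)) ^ k * ((r:ℝ)^(n:ℝ)) ^ k := by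
                rw [← mul_pow, ← Real.rpow_add (by norm_num)]
                ring_nf
              rw [e3]; ring
      apply Summable.of_nonneg_of_le (fun k => integral_nonneg (fun z => norm_nonneg _)) key
      apply Summable.mul_left
      apply summable_geometric_of_lt_one (Real.rpow_nonneg (by norm_num) _)
      exact Real.rpow_lt_one (by norm_num) (by norm_num) (by linarith)
    have hunion : IntegrableOn (fun z : EuclideanSpace ℝ (Fin n) => ‖z‖ ^ (-γ)) (⋃ k, A k) :=
      integrableOn_iUnion_of_summable_integral_norm hAint hsum
    have hcover : ball (0 : EuclideanSpace ℝ (Fin n)) R ⊆ {0} ∪ ⋃ k, A k := by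
      intro z hz
      rcases eq_or_ne z 0 with rfl | hz0
      · exact Or.inl rfl
      right
      rw [mem_ball_zero_iff] at hz
      have hzpos : 0 < ‖z‖ := norm_pos_iff.2 hz0
      have hex : ∃ j : ℕ, R * r ^ j < ‖z‖ := by
        obtain ⟨m, hm⟩ := exists_pow_lt_of_lt_one (div_pos hzpos hR) (by norm_num : (r:ℝ) < 1)
        exact ⟨m, by rwa [lt_div_iff₀ hR, mul_comm] at hm⟩
      classical
      set j := Nat.find hex with hj
      have hjspec : R * r ^ j < ‖z‖ := Nat.find_spec hex
      have hjne : j ≠ 0 := by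
        intro h0
        rw [h0] at hjspec; simp at hjspec; linarith
      obtain ⟨k, hk⟩ := Nat.exists_eq_succ_of_ne_zero hjne
      rw [hk] at hjspec
      have hmin : ¬ (R * r ^ k < ‖z‖) :=
        Nat.find_min hex (show k < j by rw [hk]; exact Nat.lt_succ_self k)
      refine mem_iUnion.2 ⟨k, ?_, ?_⟩
      · rw [mem_closedBall_zero_iff]; exact not_lt.1 hmin
      · rw [mem_ball_zero_iff, not_lt]; exact hjspec.le
    have hsing : IntegrableOn (fun z : EuclideanSpace ℝ (Fin n) => ‖z‖ ^ (-γ))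
        ({0} : Set (EuclideanSpace ℝ (Fin n))) :=
      (integrableOn_singleton_iff (by simp)).2 (Or.inr (by simp [measure_singleton]))
    exact (hsing.union hunion).mono_set hcover

lemma integrableOn_norm_rpow_compl {n : ℕ} (hn : 1 ≤ n) {β : ℝ} (hβ : (n:ℝ) < β) :
    IntegrableOn (fun z : EuclideanSpace ℝ (Fin n) => ‖z‖ ^ (-β))
      (ball (0 : EuclideanSpace ℝ (Fin n)) 1)ᶜ := by
  have hβ0 : (0:ℝ) < β := lt_of_le_of_lt (by exact_mod_cast Nat.zero_le n) hβ
  have hint : Integrable (fun z : EuclideanSpace ℝ (Fin n) => 2 ^ β * (1 + ‖z‖) ^ (-β)) :=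
    (integrable_one_add_norm (by rwa [finrank_euclideanSpace_fin])).const_mul _
  apply Integrable.mono' hint.integrableOn (measurable_norm.pow_const _).aestronglyMeasurable
  rw [ae_restrict_iff' measurableSet_ball.compl]
  filter_upwards with z hz
  rw [mem_compl_iff, mem_ball_zero_iff, not_lt] at hz
  have hzpos : (0:ℝ) < ‖z‖ := lt_of_lt_of_le one_pos hz
  rw [Real.norm_eq_abs, abs_of_nonneg (Real.rpow_nonneg (norm_nonneg _) _)]
  have key : (2 * ‖z‖) ^ (-β) ≤ (1 + ‖z‖) ^ (-β) :=
    Real.rpow_le_rpow_of_nonpos (by positivity) (by linarith) (by linarith)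
  rw [Real.mul_rpow (by norm_num) (norm_nonneg z)] at key
  have h2 : (0:ℝ) < (2:ℝ) ^ (-β) := Real.rpow_pos_of_pos two_pos _
  calc ‖z‖ ^ (-β) = (2:ℝ)^β * ((2:ℝ)^(-β) * ‖z‖ ^ (-β)) := by
        rw [← mul_assoc, ← Real.rpow_add two_pos]; simp
    _ ≤ (2:ℝ)^β * (1 + ‖z‖) ^ (-β) := by
        apply mul_le_mul_of_nonneg_left key (Real.rpow_nonneg (by norm_num) _)

lemma integrable_hker {n : ℕ} (hn : 1 ≤ n) {β : ℝ} (hβ1 : (n:ℝ) < β) (hβ2 : β < n + 2)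
    (ν : EuclideanSpace ℝ (Fin n)) : Integrable (hker n β ν) := by
  have hβ0 : (0:ℝ) < β := lt_of_le_of_lt (by exact_mod_cast Nat.zero_le n) hβ1
  rw [← integrableOn_univ, ← union_compl_self (ball (0 : EuclideanSpace ℝ (Fin n)) 1)]
  apply IntegrableOn.union
  · -- near zero : bound by (‖ν‖^2/2) ‖z‖^(-(β-2))
    have hint := (integrableOn_norm_rpow_ball hn (by push_cast; linarith : β - 2 < (n:ℝ))
      (1:ℝ)).const_mul (‖ν‖^2/2)
    apply Integrable.mono' hint (measurable_hker n β ν).aestronglyMeasurable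
    rw [ae_restrict_iff' measurableSet_ball]
    filter_upwards with z hz
    rcases eq_or_ne z 0 with rfl | hz0
    · simp [hker, Real.zero_rpow hβ0.ne']
      positivity
    have hzpos : (0:ℝ) < ‖z‖ := norm_pos_iff.2 hz0
    have hpow : (0:ℝ) < ‖z‖ ^ β := Real.rpow_pos_of_pos hzpos _
    rw [Real.norm_eq_abs, hker, abs_div, abs_of_pos hpow]
    have hnum : |Real.cos ⟪ν, z⟫ - 1| ≤ ‖ν‖^2/2 * ‖z‖^(2:ℕ) := by
      have h1 : 1 - ⟪ν, z⟫^2/2 ≤ Real.cos ⟪ν, z⟫ := Real.one_sub_sq_div_two_le_cos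
      have h2 : Real.cos ⟪ν, z⟫ ≤ 1 := Real.cos_le_one _
      have h3 : |⟪ν, z⟫| ≤ ‖ν‖ * ‖z‖ := abs_real_inner_le_norm ν z
      have h4 : ⟪ν, z⟫^2 ≤ (‖ν‖ * ‖z‖)^2 := by
        rw [← sq_abs]; exact pow_le_pow_left₀ (abs_nonneg _) h3 2
      rw [abs_le]
      constructor <;> [skip; skip] <;> nlinarith [sq_nonneg ⟪ν, z⟫]
    calc |Real.cos ⟪ν, z⟫ - 1| / ‖z‖ ^ β ≤ (‖ν‖^2/2 * ‖z‖^(2:ℕ)) / ‖z‖ ^ β := by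
          gcongr
      _ = ‖ν‖^2/2 * ‖z‖ ^ (-(β-2)) := by
          rw [mul_div_assoc]
          congr 1
          rw [← Real.rpow_natCast ‖z‖ 2, ← Real.rpow_sub hzpos]
          congr 1; push_cast; ring
  · have hint := (integrableOn_norm_rpow_compl hn hβ1).const_mul (2:ℝ)
    apply Integrable.mono' hint (measurable_hker n β ν).aestronglyMeasurable
    filter_upwards with z
    rw [Real.norm_eq_abs]
    exact abs_hker_le n β ν z

-- rotation invariance
lemma hker_rot {n : ℕ} (β R : ℝ) (e e' : EuclideanSpace ℝ (Fin n))
    (f : EuclideanSpace ℝ (Fin n) ≃ₗᵢ[ℝ] EuclideanSpace ℝ (Fin n)) (hf : f e' = e) :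
    ∫ z in ball (0 : EuclideanSpace ℝ (Fin n)) R, hker n β e z
      = ∫ z in ball (0 : EuclideanSpace ℝ (Fin n)) R, hker n β e' z := by
  have hmp : MeasurePreserving (f : EuclideanSpace ℝ (Fin n) → EuclideanSpace ℝ (Fin n)) :=
    f.measurePreserving
  have hemb : MeasurableEmbedding (f : EuclideanSpace ℝ (Fin n) → EuclideanSpace ℝ (Fin n)) :=
    f.toHomeomorph.measurableEmbedding
  have hpre : (f : EuclideanSpace ℝ (Fin n) → EuclideanSpace ℝ (Fin n)) ⁻¹'
      (ball 0 R) = ball 0 R := by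
    ext x; simp [mem_ball_zero_iff]
  calc ∫ z in ball (0 : EuclideanSpace ℝ (Fin n)) R, hker n β e z
      = ∫ x in (f : EuclideanSpace ℝ (Fin n) → EuclideanSpace ℝ (Fin n)) ⁻¹' (ball 0 R),
          hker n β e (f x) := (hmp.setIntegral_preimage_emb hemb _ _).symm
    _ = ∫ x in ball (0 : EuclideanSpace ℝ (Fin n)) R, hker n β e' x := by
        rw [hpre]
        apply setIntegral_congr_fun measurableSet_ball
        intro x _
        simp only [hker]
        rw [← hf, f.inner_map_map, f.norm_map]

-- exists rotation sending e' to e when norms agree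
lemma exists_isometry (n : ℕ) (e e' : EuclideanSpace ℝ (Fin n)) (h : ‖e'‖ = ‖e‖) :
    ∃ f : EuclideanSpace ℝ (Fin n) ≃ₗᵢ[ℝ] EuclideanSpace ℝ (Fin n), f e' = e :=
  ⟨Submodule.reflection (ℝ ∙ (e' - e))ᗮ, Submodule.reflection_sub h⟩

-- scaling
lemma hker_scale {n : ℕ} {β δ : ℝ} (hβ0 : 0 < β) (ν : EuclideanSpace ℝ (Fin n)) (hν : ν ≠ 0) :
    ∫ z in ball (0 : EuclideanSpace ℝ (Fin n)) δ, hker n β ν z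
      = ‖ν‖ ^ (β - n) * ∫ z in ball (0 : EuclideanSpace ℝ (Fin n)) (δ * ‖ν‖),
          hker n β (‖ν‖⁻¹ • ν) z := by
  set r : ℝ := ‖ν‖ with hr
  have hrpos : 0 < r := norm_pos_iff.2 hν
  have key := MeasureTheory.Measure.setIntegral_comp_smul_of_pos
    (volume : Measure (EuclideanSpace ℝ (Fin n)))
    (hker n β ν) (ball (0 : EuclideanSpace ℝ (Fin n)) (δ * r)) (inv_pos.2 hrpos)
  have hset : (r⁻¹ • ball (0 : EuclideanSpace ℝ (Fin n)) (δ * r)) = ball 0 δ := by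
    rw [smul_ball (inv_ne_zero hrpos.ne') (0 : EuclideanSpace ℝ (Fin n)) (δ * r), smul_zero]
    congr 1
    rw [norm_inv, norm_norm]
    field_simp
    exact mul_comm _ _
  have hptwise : ∀ x : EuclideanSpace ℝ (Fin n),
      hker n β ν (r⁻¹ • x) = r ^ β * hker n β (r⁻¹ • ν) x := by
    intro x
    simp only [hker]
    have h1 : ⟪ν, r⁻¹ • x⟫ = ⟪r⁻¹ • ν, x⟫ := by
      rw [real_inner_smul_right, real_inner_smul_left]
    have h2 : ‖r⁻¹ • x‖ ^ β = (r ^ β)⁻¹ * ‖x‖ ^ β := by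
      rw [norm_smul, norm_inv, norm_norm, Real.mul_rpow (by positivity) (norm_nonneg _),
        Real.inv_rpow hrpos.le]
    rw [h1, h2, div_eq_mul_inv, div_eq_mul_inv, mul_inv, inv_inv]
    ring
  rw [hset] at key
  have hL : ∫ x in ball (0 : EuclideanSpace ℝ (Fin n)) (δ * r), hker n β ν (r⁻¹ • x)
      = r ^ β * ∫ x in ball (0 : EuclideanSpace ℝ (Fin n)) (δ * r), hker n β (r⁻¹ • ν) x := by
    rw [setIntegral_congr_fun measurableSet_ball fun x _ => hptwise x,
      MeasureTheory.integral_const_mul]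
  rw [hL] at key
  have hfr : ((r⁻¹ : ℝ) ^ Module.finrank ℝ (EuclideanSpace ℝ (Fin n)))⁻¹ = r ^ (n : ℕ) := by
    rw [finrank_euclideanSpace_fin, ← inv_pow, inv_inv]
  rw [hfr, smul_eq_mul] at key
  have hF : ∫ z in ball (0 : EuclideanSpace ℝ (Fin n)) δ, hker n β ν z
      = (r ^ (n:ℕ))⁻¹ * (r ^ β * ∫ x in ball (0 : EuclideanSpace ℝ (Fin n)) (δ * r),
          hker n β (r⁻¹ • ν) x) := by
    rw [key]
    field_simp
  rw [hF, ← mul_assoc]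
  congr 1
  rw [← Real.rpow_natCast r n, ← Real.rpow_neg hrpos.le, ← Real.rpow_add hrpos]
  congr 1
  ring

lemma tendsto_g {n : ℕ} {β : ℝ} (e : EuclideanSpace ℝ (Fin n))
    (hint : Integrable (hker n β e)) :
    Tendsto (fun R : ℝ => ∫ z in ball (0 : EuclideanSpace ℝ (Fin n)) R, hker n β e z)
      atTop (𝓝 (∫ z, hker n β e z)) := by
  have hU : (⋃ R : ℝ, ball (0 : EuclideanSpace ℝ (Fin n)) R) = univ :=
    eq_univ_iff_forall.2 fun z => mem_iUnion.2
      ⟨‖z‖ + 1, mem_ball_zero_iff.2 (by linarith [norm_nonneg z])⟩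
  have := tendsto_setIntegral_of_monotone (s := fun R : ℝ => ball (0 : EuclideanSpace ℝ (Fin n)) R)
    (fun R => measurableSet_ball) (fun a b hab => ball_subset_ball hab)
    (by rw [hU]; exact hint.integrableOn)
  rwa [hU, setIntegral_univ] at this

lemma integral_hker_neg {n : ℕ} {β : ℝ} (hβ0 : 0 < β)
    (e : EuclideanSpace ℝ (Fin n)) (he : ‖e‖ = 1) (hint : Integrable (hker n β e)) :
    ∫ z, hker n β e z < 0 := by
  have hnegint : Integrable (fun z => - hker n β e z) := hint.neg
  have hq : ∀ z, 0 ≤ - hker n β e z := fun z => by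
    rw [hker, ← neg_div, neg_sub]
    exact div_nonneg (by linarith [Real.cos_le_one ⟪e, z⟫])
      (Real.rpow_nonneg (norm_nonneg _) _)
  suffices h : 0 < ∫ z, - hker n β e z by
    rw [integral_neg] at h; linarith
  set V := {z : EuclideanSpace ℝ (Fin n) | ⟪e, z⟫ ∈ Ioo (1:ℝ) 2} ∩ ball 0 3 with hVdef
  have hVopen : IsOpen V :=
    (isOpen_Ioo.preimage (continuous_const.inner continuous_id)).inter isOpen_ball
  have hVne : V.Nonempty := by
    refine ⟨(3/2 : ℝ) • e, ⟨?_, ?_⟩⟩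
    · have : ⟪e, (3/2 : ℝ) • e⟫ = (3/2 : ℝ) := by
        rw [real_inner_smul_right, real_inner_self_eq_norm_sq, he]; norm_num
      rw [mem_setOf_eq, this]
      constructor <;> norm_num
    · rw [mem_ball_zero_iff, norm_smul, he]; norm_num
  have hVsub : V ⊆ ball 0 3 := inter_subset_right
  have hVfin : volume V ≠ ⊤ := ((measure_mono hVsub).trans_lt measure_ball_lt_top).ne
  have hVpos : 0 < (volume V).toReal :=
    ENNReal.toReal_pos (hVopen.measure_pos volume hVne).ne' hVfin
  have hlow : ∀ z ∈ V, (1/3 : ℝ)/(3:ℝ)^β ≤ - hker n β e z := by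
    intro z hz
    obtain ⟨hz1, hz2⟩ := hz
    obtain ⟨ha, hb⟩ := hz1
    rw [mem_ball_zero_iff] at hz2
    have hz0 : z ≠ 0 := by
      rintro rfl
      rw [inner_zero_right] at ha; norm_num at ha
    have hzpos : (0:ℝ) < ‖z‖ := norm_pos_iff.2 hz0
    rw [hker, ← neg_div, neg_sub]
    have hcos : Real.cos ⟪e, z⟫ ≤ 2/3 := by
      calc Real.cos ⟪e, z⟫ ≤ Real.cos 1 :=
            Real.cos_le_cos_of_nonneg_of_le_pi (by norm_num)
              (by nlinarith [Real.pi_gt_three]) ha.le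
        _ ≤ 2/3 := Real.cos_one_le.trans (by norm_num)
    exact div_le_div₀ (by linarith) (by linarith) (Real.rpow_pos_of_pos hzpos β)
      (Real.rpow_le_rpow hzpos.le hz2.le hβ0.le)
  have h1 : (1/3 : ℝ)/(3:ℝ)^β * (volume V).toReal ≤ ∫ z in V, - hker n β e z :=
    setIntegral_ge_of_const_le_real hVopen.measurableSet hVfin hlow hnegint.integrableOn
  have h2 : ∫ z in V, - hker n β e z ≤ ∫ z, - hker n β e z :=
    setIntegral_le_integral hnegint (Filter.Eventually.of_forall hq)
  have hc0 : (0:ℝ) < (1/3 : ℝ)/(3:ℝ)^β := by positivity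
  nlinarith

end Aux

/-- Asymptotics of the Fourier multiplier: for `n < β < n+2`,
`|m^{δ,β}(ν)| ~ C ‖ν‖^{β−n}` as `‖ν‖ → ∞` for some constant `C = C(n,β,δ) > 0`,
whereas for `β < n` the multiplier remains bounded. -/
theorem nonlocal_multiplier_asymptotics (n : ℕ) (hn : 1 ≤ n) (δ β : ℝ)
    (hδ : 0 < δ) (hβ : β < n + 2) :
    ((n : ℝ) < β →
      ∃ C > 0, Tendsto
        (fun ν : EuclideanSpace ℝ (Fin n) =>
          |nonlocalMultiplierFn n δ β ν| / ‖ν‖ ^ (β - n))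
        (Filter.comap norm Filter.atTop) (𝓝 C)) ∧
    (β < n →
      ∃ M : ℝ, ∀ ν : EuclideanSpace ℝ (Fin n), |nonlocalMultiplierFn n δ β ν| ≤ M) := by
  set c : ℝ := 2 * (n + 2 - β) * Real.Gamma ((n : ℝ) / 2 + 1) /
      (Real.pi ^ ((n : ℝ) / 2) * δ ^ ((n : ℝ) + 2 - β)) with hc
  have hcpos : 0 < c := div_pos
    (mul_pos (mul_pos two_pos (by linarith)) (Real.Gamma_pos_of_pos (by positivity)))
    (mul_pos (Real.rpow_pos_of_pos Real.pi_pos _) (Real.rpow_pos_of_pos hδ _))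
  have hm : ∀ ν, nonlocalMultiplierFn n δ β ν
      = c * ∫ z in ball (0 : EuclideanSpace ℝ (Fin n)) δ, hker n β ν z := fun ν => rfl
  constructor
  · -- growth
    intro hβ1
    have hn0 : (0:ℝ) < (n:ℝ) := by exact_mod_cast hn
    have hβ0 : (0:ℝ) < β := lt_trans hn0 hβ1
    set e₀ : EuclideanSpace ℝ (Fin n) := EuclideanSpace.single (⟨0, hn⟩ : Fin n) (1:ℝ)
      with he₀def
    have he₀ : ‖e₀‖ = 1 := by rw [he₀def, EuclideanSpace.norm_single]; norm_num
    have hint : Integrable (hker n β e₀) := integrable_hker hn hβ1 hβ e₀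
    have hL : ∫ z, hker n β e₀ z < 0 := integral_hker_neg hβ0 e₀ he₀ hint
    refine ⟨c * |∫ z, hker n β e₀ z|, mul_pos hcpos (abs_pos.2 hL.ne), ?_⟩
    have h1 : Tendsto (fun ν : EuclideanSpace ℝ (Fin n) => δ * ‖ν‖)
        (Filter.comap norm Filter.atTop) atTop :=
      Tendsto.const_mul_atTop hδ tendsto_comap
    have htends : Tendsto (fun ν : EuclideanSpace ℝ (Fin n) =>
        c * |∫ z in ball (0 : EuclideanSpace ℝ (Fin n)) (δ * ‖ν‖), hker n β e₀ z|)
        (Filter.comap norm Filter.atTop) (𝓝 (c * |∫ z, hker n β e₀ z|)) :=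
      (((tendsto_g e₀ hint).comp h1).abs).const_mul c
    apply htends.congr'
    have hev : ∀ᶠ ν : EuclideanSpace ℝ (Fin n) in Filter.comap norm Filter.atTop, 1 ≤ ‖ν‖ :=
      tendsto_comap.eventually (eventually_ge_atTop 1)
    filter_upwards [hev] with ν hν
    have hν0 : ν ≠ 0 := fun h => by rw [h, norm_zero] at hν; linarith
    have hνpos : 0 < ‖ν‖ := by linarith
    have hrot : ∫ z in ball (0 : EuclideanSpace ℝ (Fin n)) (δ * ‖ν‖), hker n β (‖ν‖⁻¹ • ν) z
        = ∫ z in ball (0 : EuclideanSpace ℝ (Fin n)) (δ * ‖ν‖), hker n β e₀ z := by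
      have hnorm : ‖e₀‖ = ‖‖ν‖⁻¹ • ν‖ := by
        rw [he₀, norm_smul, norm_inv, norm_norm]
        field_simp
      obtain ⟨f, hf⟩ := exists_isometry n (‖ν‖⁻¹ • ν) e₀ hnorm
      exact hker_rot β (δ * ‖ν‖) _ e₀ f hf
    have habs : |nonlocalMultiplierFn n δ β ν|
        = c * (‖ν‖ ^ (β - n) *
            |∫ z in ball (0 : EuclideanSpace ℝ (Fin n)) (δ * ‖ν‖), hker n β e₀ z|) := by
      rw [hm ν, hker_scale hβ0 ν hν0, hrot, abs_mul, abs_mul, abs_of_pos hcpos,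
        abs_of_pos (Real.rpow_pos_of_pos hνpos _)]
    rw [habs]
    have hp : (0:ℝ) < ‖ν‖ ^ (β - n) := Real.rpow_pos_of_pos hνpos _
    field_simp
  · -- bounded
    intro hβn
    refine ⟨|c| * ∫ z in ball (0 : EuclideanSpace ℝ (Fin n)) δ, 2 * ‖z‖ ^ (-β), ?_⟩
    intro ν
    have hbound2 : IntegrableOn (fun z : EuclideanSpace ℝ (Fin n) => 2 * ‖z‖ ^ (-β))
        (ball 0 δ) := (integrableOn_norm_rpow_ball hn hβn δ).const_mul 2
    have hint : IntegrableOn (hker n β ν) (ball (0 : EuclideanSpace ℝ (Fin n)) δ) := by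
      apply Integrable.mono' hbound2 (measurable_hker n β ν).aestronglyMeasurable
      filter_upwards with z
      rw [Real.norm_eq_abs]
      exact abs_hker_le n β ν z
    rw [hm ν, abs_mul]
    apply mul_le_mul_of_nonneg_left ?_ (abs_nonneg c)
    calc |∫ z in ball (0 : EuclideanSpace ℝ (Fin n)) δ, hker n β ν z|
        ≤ ∫ z in ball (0 : EuclideanSpace ℝ (Fin n)) δ, |hker n β ν z| := by
          simpa [Real.norm_eq_abs] using
            norm_integral_le_integral_norm (μ := volume.restrict (ball (0 : EuclideanSpace ℝ (Fin n)) δ))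
              (hker n β ν)
      _ ≤ ∫ z in ball (0 : EuclideanSpace ℝ (Fin n)) δ, 2 * ‖z‖ ^ (-β) := by
          apply setIntegral_mono_on hint.abs hbound2 measurableSet_ball
          intro z _
          exact abs_hker_le n β ν z
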